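/- For the rank-one root system A_1 with positive root α: for integers k ≥ 1, N ≥ 1 and 0 ≤ j < N, set m = kN + j. In the partially ordered set P^+(m,N) of N-tuples of nonnegative integers summing to m, ordered by λ̄ ⪯ μ̄ iff for every 1 ≤ p ≤ N the minimum over p-element subsets of the coordinate sums of λ̄ is at most the corresponding minimum for μ̄, the tuple (k,…,k,k+1,…,k+1) (with N−j entries equal to k and j entries equal to k+1) is the unique maximal element up to permutation. -/

import Mathlib

/-- `rmin p λ̄` is the minimum, over all `p`-element subsets
`{i_1 < ⋯ < i_p} ⊆ {1,…,N}`, of `λ_{i_1} + ⋯ + λ_{i_p}`. -/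
noncomputable def rmin {N : ℕ} (p : ℕ) (lam : Fin N → ℕ) : ℕ :=
  sInf {m | ∃ s : Finset (Fin N), s.card = p ∧ ∑ i ∈ s, lam i = m}

/-- The partial order `λ̄ ⪯ μ̄` on `N`-tuples of nonnegative integers:
`rmin p λ̄ ≤ rmin p μ̄` for all `1 ≤ p ≤ N`. -/
def tupleLE {N : ℕ} (lam mu : Fin N → ℕ) : Prop :=
  ∀ p, 1 ≤ p → p ≤ N → rmin p lam ≤ rmin p mu

lemma rmin_le' {N p : ℕ} {f : Fin N → ℕ} {s : Finset (Fin N)} (hs : s.card = p) :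
    rmin p f ≤ ∑ i ∈ s, f i :=
  Nat.sInf_le ⟨s, hs, rfl⟩

lemma le_rmin' {N p a : ℕ} {f : Fin N → ℕ} (hp : p ≤ N)
    (h : ∀ s : Finset (Fin N), s.card = p → a ≤ ∑ i ∈ s, f i) : a ≤ rmin p f := by
  obtain ⟨s, -, hs⟩ := Finset.exists_subset_card_eq
    (show p ≤ (Finset.univ : Finset (Fin N)).card by simpa using hp)
  exact le_csInf ⟨_, s, hs, rfl⟩ (by rintro b ⟨t, ht, rfl⟩; exact h t ht)

lemma card_filter_lt_fin (N m : ℕ) (h : m ≤ N) :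
    (Finset.univ.filter (fun i : Fin N => (i:ℕ) < m)).card = m := by
  rw [show (Finset.univ.filter (fun i : Fin N => (i:ℕ) < m))
      = (Finset.univ : Finset (Fin m)).map ⟨Fin.castLE h, Fin.castLE_injective h⟩ by
    ext i
    simp only [Finset.mem_filter, Finset.mem_univ, true_and, Finset.mem_map,
      Function.Embedding.coeFn_mk]
    constructor
    · intro hi; exact ⟨⟨i, hi⟩, rfl⟩
    · rintro ⟨a, rfl⟩; exact a.2]
  simp

/-- For `sl₂`: with `m = kN + j`, `0 ≤ j < N`, `k ≥ 1`, the tuple with `N − j`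
entries equal to `k` and `j` entries equal to `k+1` is the unique maximal element of
`(P⁺(m,N), ⪯)` up to permutation: any tuple `μ̄` of nonnegative integers summing to
`m` with `(k,…,k,k+1,…,k+1) ⪯ μ̄` is a permutation of `(k,…,k,k+1,…,k+1)`. -/
theorem sl2_unique_maximal (k N j : ℕ) (hk : 1 ≤ k) (hN : 1 ≤ N) (hj : j < N)
    (lam : Fin N → ℕ) (hlam : ∀ i : Fin N, lam i = if (i : ℕ) < N - j then k else k + 1)
    (mu : Fin N → ℕ) (hsum : ∑ i, mu i = k * N + j)
    (hle : tupleLE lam mu) :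
    ∃ σ : Equiv.Perm (Fin N), ∀ i, mu (σ i) = lam i := by
  classical
  -- Step 1 : every entry of mu is at least k
  have hmuge : ∀ i, k ≤ mu i := by
    have h1 : k ≤ rmin 1 lam := by
      refine le_rmin' hN fun s hs => ?_
      obtain ⟨i, rfl⟩ := Finset.card_eq_one.mp hs
      rw [Finset.sum_singleton, hlam i]
      split <;> omega
    intro i
    calc k ≤ rmin 1 lam := h1
      _ ≤ rmin 1 mu := hle 1 le_rfl hN
      _ ≤ ∑ x ∈ {i}, mu x := rmin_le' (by simp)
      _ = mu i := by simp
  -- Step 2 : every entry of mu is at most k+1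
  have hmule : ∀ i, mu i ≤ k + 1 := by
    by_contra hcon
    push_neg at hcon
    obtain ⟨i0, hi0⟩ := hcon
    set S := Finset.univ.filter (fun i : Fin N => mu i = k) with hS
    set Sc := Finset.univ.filter (fun i : Fin N => ¬ mu i = k) with hSc
    have hi0mem : i0 ∈ Sc := by simp [hSc]; omega
    have hScpos : 1 ≤ Sc.card := Finset.card_pos.mpr ⟨i0, hi0mem⟩
    obtain ⟨c', hc'⟩ : ∃ c', Sc.card = c' + 1 := ⟨Sc.card - 1, by omega⟩
    have hcards : S.card + Sc.card = N := by
      simpa using Finset.card_filter_add_card_filter_not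
        (s := (Finset.univ : Finset (Fin N))) (p := fun i : Fin N => mu i = k)
    have hsumS : ∑ i ∈ S, mu i = k * S.card := by
      rw [Finset.sum_congr rfl (fun i hi => by
        simp only [hS, Finset.mem_filter] at hi; exact hi.2)]
      simp [mul_comm]
    have hsumSc : (k + 2) + c' * (k + 1) ≤ ∑ i ∈ Sc, mu i := by
      rw [← Finset.add_sum_erase _ _ hi0mem]
      have h1 : c' * (k+1) ≤ ∑ i ∈ Sc.erase i0, mu i := by
        have := Finset.card_nsmul_le_sum (Sc.erase i0) mu (k+1) (fun i hi => by
          have hi' := Finset.mem_of_mem_erase hi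
          simp only [hSc, Finset.mem_filter] at hi'
          have := hmuge i; omega)
        simpa [Finset.card_erase_of_mem hi0mem, hc', smul_eq_mul] using this
      omega
    have htotal : ∑ i ∈ S, mu i + ∑ i ∈ Sc, mu i = k * N + j := by
      rw [Finset.sum_filter_add_sum_filter_not]; exact hsum
    have hring1 : k * S.card + k * c' + k = k * N := by
      have h1 : k * (S.card + Sc.card) = k * N := by rw [hcards]
      have h2 : k * (S.card + Sc.card) = k * S.card + k * Sc.card := by ring
      have h3 : k * Sc.card = k * c' + k := by rw [hc']; ring
      omega
    have hring2 : c' * (k + 1) = k * c' + c' := by ring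
    -- conclude j ≥ c' + 2
    have hjge : c' + 2 ≤ j := by omega
    -- choose a (N-j+1)-subset of S, all entries equal k
    have hp1 : N - j + 1 ≤ S.card := by omega
    obtain ⟨T, hTS, hT⟩ := Finset.exists_subset_card_eq hp1
    have hTsum : ∑ i ∈ T, mu i = k * (N - j + 1) := by
      rw [Finset.sum_congr rfl (fun i hi => by
        have := hTS hi
        simp only [hS, Finset.mem_filter] at this; exact this.2)]
      simp [hT, mul_comm]
    have hupper : rmin (N - j + 1) mu ≤ k * (N - j + 1) := by
      calc rmin (N - j + 1) mu ≤ ∑ i ∈ T, mu i := rmin_le' hT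
        _ = k * (N - j + 1) := hTsum
    have hlower : k * (N - j + 1) + 1 ≤ rmin (N - j + 1) lam := by
      refine le_rmin' (by omega) fun s hs => ?_
      set a := (s.filter (fun i : Fin N => (i:ℕ) < N - j)).card with ha
      set b := (s.filter (fun i : Fin N => ¬ (i:ℕ) < N - j)).card with hb
      have hab : a + b = N - j + 1 := by
        rw [ha, hb, Finset.card_filter_add_card_filter_not, hs]
      have haub : a ≤ N - j := by
        have hsub : s.filter (fun i : Fin N => (i:ℕ) < N - j)
            ⊆ Finset.univ.filter (fun i : Fin N => (i:ℕ) < N - j) :=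
          Finset.filter_subset_filter _ (Finset.subset_univ s)
        have := Finset.card_le_card hsub
        rw [card_filter_lt_fin N (N - j) (by omega)] at this
        exact this
      have hbpos : 1 ≤ b := by omega
      have hsplit : ∑ i ∈ s, lam i = k * a + (k + 1) * b := by
        rw [← Finset.sum_filter_add_sum_filter_not s (fun i : Fin N => (i:ℕ) < N - j)]
        congr 1
        · rw [Finset.sum_congr rfl (fun i hi => by
            rw [hlam i, if_pos (Finset.mem_filter.mp hi).2])]
          simp [ha, mul_comm]
        · rw [Finset.sum_congr rfl (fun i hi => by
            rw [hlam i, if_neg (Finset.mem_filter.mp hi).2])]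
          simp [hb, mul_comm]
      have hring3 : k * a + (k + 1) * b = k * (a + b) + b := by ring
      have hring4 : k * (a + b) = k * (N - j + 1) := by rw [hab]
      omega
    have := hle (N - j + 1) (by omega) (by omega)
    omega
  -- Step 3 : counting and permutation
  set Qq := fun i : Fin N => mu i = k + 1 with hQq
  set Pp := fun i : Fin N => ¬ (i : ℕ) < N - j with hPp
  have hcardsQ : (Finset.univ.filter Qq).card + (Finset.univ.filter (fun i => ¬ Qq i)).card = N := by
    simpa using Finset.card_filter_add_card_filter_not
      (s := (Finset.univ : Finset (Fin N))) (p := Qq)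
  have hcardQ : (Finset.univ.filter Qq).card = j := by
    have h1 : ∑ i ∈ Finset.univ.filter Qq, mu i = (k+1) * (Finset.univ.filter Qq).card := by
      rw [Finset.sum_congr rfl (fun i hi => (Finset.mem_filter.mp hi).2)]
      rw [Finset.sum_const, smul_eq_mul, mul_comm]
    have h2 : ∑ i ∈ Finset.univ.filter (fun i => ¬ Qq i), mu i
        = k * (Finset.univ.filter (fun i => ¬ Qq i)).card := by
      rw [Finset.sum_congr rfl (fun i hi => show mu i = k by
        have h := (Finset.mem_filter.mp hi).2
        have h3 := hmuge i; have h4 := hmule i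
        simp only [hQq] at h; omega)]
      simp [mul_comm]
    have htotal : ∑ i ∈ Finset.univ.filter Qq, mu i
        + ∑ i ∈ Finset.univ.filter (fun i => ¬ Qq i), mu i = k * N + j := by
      rw [Finset.sum_filter_add_sum_filter_not]; exact hsum
    set a := (Finset.univ.filter Qq).card
    set b := (Finset.univ.filter (fun i => ¬ Qq i)).card
    have hring1 : (k+1) * a + k * b = k * (a + b) + a := by ring
    have hring2 : k * (a + b) = k * N := by rw [hcardsQ]
    omega
  have hcardsP : (Finset.univ.filter Pp).card + (Finset.univ.filter (fun i => ¬ Pp i)).card = N := by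
    simpa using Finset.card_filter_add_card_filter_not
      (s := (Finset.univ : Finset (Fin N))) (p := Pp)
  have hcardP : (Finset.univ.filter Pp).card = j := by
    have h1 : (Finset.univ.filter (fun i => ¬ Pp i)).card = N - j := by
      have : (Finset.univ.filter (fun i : Fin N => ¬ Pp i))
          = Finset.univ.filter (fun i : Fin N => (i:ℕ) < N - j) := by
        apply Finset.filter_congr; intro i _; simp only [hPp, not_not, not_lt]; omega
      rw [this, card_filter_lt_fin N (N - j) (by omega)]
    omega
  have hc1 : Fintype.card {i // Pp i} = Fintype.card {i // Qq i} := by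
    rw [Fintype.card_subtype, Fintype.card_subtype, hcardP, hcardQ]
  have hc2 : Fintype.card {i // ¬ Pp i} = Fintype.card {i // ¬ Qq i} := by
    rw [Fintype.card_subtype, Fintype.card_subtype]; omega
  let e : {i // Pp i} ≃ {i // Qq i} := Fintype.equivOfCardEq hc1
  let f : {i // ¬ Pp i} ≃ {i // ¬ Qq i} := Fintype.equivOfCardEq hc2
  refine ⟨Equiv.subtypeCongr e f, fun i => ?_⟩
  by_cases h : Pp i
  · have hσ : Equiv.subtypeCongr e f i = ((e ⟨i, h⟩ : {i // Qq i}) : Fin N) := by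
      simp [Equiv.subtypeCongr, Equiv.sumCompl_symm_apply_of_pos h]
    rw [hσ]
    have hq := (e ⟨i, h⟩).2
    simp only [hQq] at hq
    rw [hq, hlam i, if_neg h]
  · have hσ : Equiv.subtypeCongr e f i = ((f ⟨i, h⟩ : {i // ¬ Qq i}) : Fin N) := by
      simp [Equiv.subtypeCongr, Equiv.sumCompl_symm_apply_of_neg h]
    rw [hσ]
    have hq := (f ⟨i, h⟩).2
    simp only [hQq] at hq
    have h1 := hmuge ((f ⟨i, h⟩ : {i // ¬ Qq i}) : Fin N)
    have h2 := hmule ((f ⟨i, h⟩ : {i // ¬ Qq i}) : Fin N)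
    have h' : (i : ℕ) < N - j := by
      by_contra hcc
      exact h hcc
    rw [hlam i, if_pos h']
    omega
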